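/- In the Heisenberg group H with generating set S = {x,y}, where x is the unitriangular matrix with (1,2)-entry 1 and y the one with (2,3)-entry 1, the element x lies in the kernel of the natural action of H on every asymptotic cone: for every nonprincipal ultrafilter ω on ℕ, every unbounded nondecreasing sequence (d_n) of positive real numbers, and every sequence (g_n) in H with (‖g_n‖_S/d_n) bounded, the sequence ‖g_n⁻¹ x g_n‖_S / d_n converges to 0 along ω. Since the conjugacy class of x is infinite, this shows FC(H) ⊊ ker(H ↷ Cone_ω(H,d_n)). -/

import Mathlib

open Matrix Filter

abbrev M3 : Type := Matrix (Fin 3) (Fin 3) ℤ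

def Heisenberg : Subgroup M3ˣ where
  carrier := {u | ∃ a b c : ℤ, (u : M3) = !![1, a, c; 0, 1, b; 0, 0, 1]}
  one_mem' := ⟨0, 0, 0, by rw [Units.val_one]; exact Matrix.one_fin_three⟩
  mul_mem' := by
    rintro u v ⟨a, b, c, hu⟩ ⟨a', b', c', hv⟩
    refine ⟨a + a', b + b', c + c' + a * b', ?_⟩
    show (u : M3) * v = _
    rw [hu, hv, Matrix.mul_fin_three]
    norm_num
    ring_nf
    exact ⟨⟨trivial, trivial⟩, trivial⟩
  inv_mem' := by
    rintro u ⟨a, b, c, hu⟩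
    refine ⟨-a, -b, a * b - c, ?_⟩
    have h : (u : M3) * !![1, -a, a * b - c; 0, 1, -b; 0, 0, 1] = 1 := by
      rw [hu, Matrix.mul_fin_three, Matrix.one_fin_three]
      norm_num
      ring_nf
    exact Units.inv_eq_of_mul_eq_one_right h

def xu : M3ˣ where
  val := !![1, 1, 0; 0, 1, 0; 0, 0, 1]
  inv := !![1, -1, 0; 0, 1, 0; 0, 0, 1]
  val_inv := by rw [Matrix.mul_fin_three, Matrix.one_fin_three]; norm_num
  inv_val := by rw [Matrix.mul_fin_three, Matrix.one_fin_three]; norm_num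

def yu : M3ˣ where
  val := !![1, 0, 0; 0, 1, 1; 0, 0, 1]
  inv := !![1, 0, 0; 0, 1, -1; 0, 0, 1]
  val_inv := by rw [Matrix.mul_fin_three, Matrix.one_fin_three]; norm_num
  inv_val := by rw [Matrix.mul_fin_three, Matrix.one_fin_three]; norm_num

/-- The generator `x`: unitriangular matrix with (1,2)-entry 1. -/
def x : Heisenberg := ⟨xu, 1, 0, 0, rfl⟩

/-- The generator `y`: unitriangular matrix with (2,3)-entry 1. -/
def y : Heisenberg := ⟨yu, 0, 1, 0, rfl⟩

/-- The word length of `g` with respect to a generating set `S`. -/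
noncomputable def wordLength {G : Type*} [Group G] (S : Set G) (g : G) : ℕ :=
  sInf {n | ∃ l : List G, (∀ x ∈ l, x ∈ S ∨ x⁻¹ ∈ S) ∧ l.length = n ∧ l.prod = g}

/-- `g` lies in the kernel of the natural action of `G` on the asymptotic cone
`Cone_ω(G, d_n)`. -/
def inConeKernel {G : Type*} [Group G] (S : Set G) (ω : Ultrafilter ℕ) (d : ℕ → ℝ)
    (g : G) : Prop :=
  ∀ xseq : ℕ → G, (∃ B : ℝ, ∀ n, (wordLength S (xseq n) : ℝ) / d n ≤ B) →
    Tendsto (fun n => (wordLength S ((xseq n)⁻¹ * g * xseq n) : ℝ) / d n)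
      (ω : Filter ℕ) (nhds 0)

-- auxiliary

def hm (a b c : ℤ) : M3 := !![1, a, c; 0, 1, b; 0, 0, 1]

lemma hm_mul (a b c a' b' c' : ℤ) :
    hm a b c * hm a' b' c' = hm (a + a') (b + b') (c + c' + a * b') := by
  unfold hm
  rw [Matrix.mul_fin_three]
  norm_num
  ring_nf
  exact ⟨⟨trivial, trivial⟩, trivial⟩

def h (a b c : ℤ) : Heisenberg :=
  ⟨⟨hm a b c, hm (-a) (-b) (a * b - c),
    by rw [hm_mul]; unfold hm; rw [Matrix.one_fin_three]; norm_num,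
    by rw [hm_mul]; unfold hm; rw [Matrix.one_fin_three]; norm_num⟩,
    a, b, c, rfl⟩

lemma h_mul (a b c a' b' c' : ℤ) :
    h a b c * h a' b' c' = h (a + a') (b + b') (c + c' + a * b') :=
  Subtype.ext (Units.ext (hm_mul a b c a' b' c'))

lemma h_one : h 0 0 0 = 1 := by
  refine Subtype.ext (Units.ext ?_)
  show hm 0 0 0 = 1
  unfold hm; rw [Matrix.one_fin_three]

lemma h_inv (a b c : ℤ) : (h a b c)⁻¹ = h (-a) (-b) (a * b - c) := by
  refine Subtype.ext (Units.ext ?_)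
  rfl

lemma x_eq : x = h 1 0 0 := by
  refine Subtype.ext (Units.ext ?_)
  show (xu : M3) = hm 1 0 0
  rfl

lemma y_eq : y = h 0 1 0 := by
  refine Subtype.ext (Units.ext ?_)
  rfl

/-- coordinate maps -/
def Ac (g : Heisenberg) : ℤ := ((g : M3ˣ) : M3) 0 1
def Bc (g : Heisenberg) : ℤ := ((g : M3ˣ) : M3) 1 2
def Cc (g : Heisenberg) : ℤ := ((g : M3ˣ) : M3) 0 2

lemma Ac_h (a b c : ℤ) : Ac (h a b c) = a := by simp [Ac, h, hm]
lemma Bc_h (a b c : ℤ) : Bc (h a b c) = b := by simp [Bc, h, hm]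
lemma Cc_h (a b c : ℤ) : Cc (h a b c) = c := by simp [Cc, h, hm]

lemma eq_h (g : Heisenberg) : g = h (Ac g) (Bc g) (Cc g) := by
  obtain ⟨a, b, c, hg⟩ := g.2
  have h1 : g = h a b c := by
    refine Subtype.ext (Units.ext ?_)
    exact hg
  rw [h1, Ac_h, Bc_h, Cc_h]

lemma Bc_mul (g g' : Heisenberg) : Bc (g * g') = Bc g + Bc g' := by
  rw [eq_h g, eq_h g', h_mul, Bc_h, Bc_h, Bc_h]

set_option maxHeartbeats 800000 in
lemma pow_h (a b c : ℤ) (hab : a * b = 0) (n : ℕ) :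
    (h a b c) ^ n = h (n * a) (n * b) (n * c) := by
  induction n with
  | zero => simpa using h_one.symm
  | succ n ih =>
      rw [pow_succ, ih, h_mul]
      have : (n:ℤ) * c + c + (n:ℤ) * a * b = (n+1:ℕ) * c := by
        push_cast; rw [mul_assoc, hab]; ring
      rw [this]
      congr 1 <;> push_cast <;> ring


def S : Set Heisenberg := {x, y}

def okWord (l : List Heisenberg) : Prop := ∀ w ∈ l, w ∈ S ∨ w⁻¹ ∈ S

lemma wl_le {g : Heisenberg} {l : List Heisenberg} (hl : okWord l) (hp : l.prod = g) :
    wordLength S g ≤ l.length :=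
  Nat.sInf_le ⟨l, hl, rfl, hp⟩

lemma ok_x : x ∈ S ∨ x⁻¹ ∈ S := Or.inl (Or.inl rfl)
lemma ok_y : y ∈ S ∨ y⁻¹ ∈ S := Or.inl (Or.inr rfl)
lemma ok_xinv : x⁻¹ ∈ S ∨ (x⁻¹)⁻¹ ∈ S := Or.inr (by rw [inv_inv]; exact Or.inl rfl)
lemma ok_yinv : y⁻¹ ∈ S ∨ (y⁻¹)⁻¹ ∈ S := Or.inr (by rw [inv_inv]; exact Or.inr rfl)

lemma ok_replicate {g : Heisenberg} (hg : g ∈ S ∨ g⁻¹ ∈ S) (k : ℕ) :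
    okWord (List.replicate k g) := by
  intro w hw
  rw [List.eq_of_mem_replicate hw]
  exact hg

lemma ok_append {l l' : List Heisenberg} (hl : okWord l) (hl' : okWord l') :
    okWord (l ++ l') := by
  intro w hw
  rcases List.mem_append.mp hw with h | h
  · exact hl w h
  · exact hl' w h

lemma prod_replicate_h {g : Heisenberg} {a b c : ℤ} (hg : g = h a b c) (hab : a * b = 0)
    (k : ℕ) : (List.replicate k g).prod = h (k * a) (k * b) (k * c) := by
  rw [List.prod_replicate, hg, pow_h a b c hab]

lemma xinv_eq : x⁻¹ = h (-1) 0 0 := by rw [x_eq, h_inv]; norm_num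
lemma yinv_eq : y⁻¹ = h 0 (-1) 0 := by rw [y_eq, h_inv]; norm_num

/-- the central element z = h 0 0 1 as a word -/
lemma comm_word : ([x, y, x⁻¹, y⁻¹] : List Heisenberg).prod = h 0 0 1 := by
  simp only [List.prod_cons, List.prod_nil, mul_one]
  rw [xinv_eq, yinv_eq, x_eq, y_eq, h_mul, h_mul, h_mul]
  norm_num

def zWord (k r : ℕ) : List Heisenberg :=
  List.replicate k x ++ List.replicate k y ++ List.replicate k x⁻¹ ++
    List.replicate k y⁻¹ ++ (List.replicate r ([x, y, x⁻¹, y⁻¹] : List Heisenberg)).flatten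

lemma zWord_ok (k r : ℕ) : okWord (zWord k r) := by
  refine ok_append (ok_append (ok_append (ok_append ?_ ?_) ?_) ?_) ?_
  · exact ok_replicate ok_x k
  · exact ok_replicate ok_y k
  · exact ok_replicate ok_xinv k
  · exact ok_replicate ok_yinv k
  · intro w hw
    obtain ⟨l, hl, hwl⟩ := List.mem_flatten.mp hw
    rw [List.eq_of_mem_replicate hl] at hwl
    fin_cases hwl
    · exact ok_x
    · exact ok_y
    · exact ok_xinv
    · exact ok_yinv

lemma zWord_length (k r : ℕ) : (zWord k r).length = 4 * k + 4 * r := by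
  simp [zWord, List.length_flatten, List.length_append, List.length_replicate]
  ring

lemma zWord_prod (k r : ℕ) : (zWord k r).prod = h 0 0 (k * k + r) := by
  unfold zWord
  rw [List.prod_append, List.prod_append, List.prod_append, List.prod_append]
  rw [prod_replicate_h x_eq (by ring) k, prod_replicate_h y_eq (by ring) k,
    prod_replicate_h xinv_eq (by ring) k, prod_replicate_h yinv_eq (by ring) k]
  have hj : ((List.replicate r ([x, y, x⁻¹, y⁻¹] : List Heisenberg)).flatten).prod
      = h 0 0 r := by
    rw [List.prod_flatten, List.map_replicate, List.prod_replicate, comm_word,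
      pow_h 0 0 1 (by ring) r]
    norm_num
  rw [hj, h_mul, h_mul, h_mul, h_mul]
  congr 1 <;> push_cast <;> ring

lemma ok_inv_reverse {l : List Heisenberg} (hl : okWord l) :
    okWord ((l.map (·⁻¹)).reverse) := by
  intro w hw
  rw [List.mem_reverse, List.mem_map] at hw
  obtain ⟨a, ha, rfl⟩ := hw
  rcases hl a ha with hh | hh
  · exact Or.inr (by rwa [inv_inv])
  · exact Or.inl hh

lemma exists_word_z_nat (m : ℕ) : ∃ l : List Heisenberg,
    okWord l ∧ l.prod = h 0 0 m ∧ l.length ≤ 12 * Nat.sqrt m := by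
  set k := Nat.sqrt m with hk
  have hk2 : k * k ≤ m := by have := Nat.sqrt_le' m; nlinarith [this]
  have hk3 : m < (k + 1) * (k + 1) := by have := Nat.lt_succ_sqrt' m; nlinarith [this]
  set r := m - k * k with hr
  refine ⟨zWord k r, zWord_ok k r, ?_, ?_⟩
  · rw [zWord_prod]
    congr 1
    have : k * k + r = m := by omega
    rw [← this]
    push_cast
    ring
  · rw [zWord_length]
    have h4 : m < k * k + 2 * k + 1 := by nlinarith
    omega

lemma exists_word_z (t : ℤ) : ∃ l : List Heisenberg,
    okWord l ∧ l.prod = h 0 0 t ∧ l.length ≤ 12 * Nat.sqrt t.natAbs := by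
  obtain ⟨l, hl, hp, hlen⟩ := exists_word_z_nat t.natAbs
  rcases Int.natAbs_eq t with ht | ht
  · exact ⟨l, hl, by rw [hp, ht]; norm_num, hlen⟩
  · refine ⟨(l.map (·⁻¹)).reverse, ok_inv_reverse hl, ?_, by simpa using hlen⟩
    rw [← List.prod_inv_reverse, hp, h_inv]
    congr 1
    omega

lemma wl_z (t : ℤ) : wordLength S (h 0 0 t) ≤ 12 * Nat.sqrt t.natAbs := by
  obtain ⟨l, hl, hp, hlen⟩ := exists_word_z t
  exact le_trans (wl_le hl hp) hlen

lemma wl_conj_x (t : ℤ) : wordLength S (h 1 0 t) ≤ 12 * Nat.sqrt t.natAbs + 1 := by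
  obtain ⟨l, hl, hp, hlen⟩ := exists_word_z t
  have hprod : (x :: l).prod = h 1 0 t := by
    rw [List.prod_cons, hp, x_eq, h_mul]
    norm_num
  have hok : okWord (x :: l) := by
    intro w hw
    rcases List.mem_cons.mp hw with rfl | hw
    · exact ok_x
    · exact hl w hw
  calc wordLength S (h 1 0 t) ≤ (x :: l).length := wl_le hok hprod
    _ = l.length + 1 := by simp
    _ ≤ 12 * Nat.sqrt t.natAbs + 1 := by omega

lemma exists_word_any (g : Heisenberg) : ∃ l : List Heisenberg, okWord l ∧ l.prod = g := by
  rw [eq_h g]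
  set a := Ac g; set b := Bc g; set c := Cc g
  have hx : ∃ l : List Heisenberg, okWord l ∧ l.prod = h a 0 0 := by
    rcases Int.natAbs_eq a with ha | ha
    · refine ⟨List.replicate a.natAbs x, ok_replicate ok_x _, ?_⟩
      rw [prod_replicate_h x_eq (by ring)]
      rw [ha]; norm_num
    · refine ⟨List.replicate a.natAbs x⁻¹, ok_replicate ok_xinv _, ?_⟩
      rw [prod_replicate_h xinv_eq (by ring)]
      rw [ha]; norm_num
  have hy : ∃ l : List Heisenberg, okWord l ∧ l.prod = h 0 b 0 := by
    rcases Int.natAbs_eq b with hb | hb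
    · refine ⟨List.replicate b.natAbs y, ok_replicate ok_y _, ?_⟩
      rw [prod_replicate_h y_eq (by ring)]
      rw [hb]; norm_num
    · refine ⟨List.replicate b.natAbs y⁻¹, ok_replicate ok_yinv _, ?_⟩
      rw [prod_replicate_h yinv_eq (by ring)]
      rw [hb]; norm_num
  obtain ⟨lx, hlx, hpx⟩ := hx
  obtain ⟨ly, hly, hpy⟩ := hy
  obtain ⟨lz, hlz, hpz, -⟩ := exists_word_z (c - a * b)
  refine ⟨lx ++ ly ++ lz, ok_append (ok_append hlx hly) hlz, ?_⟩
  rw [List.prod_append, List.prod_append, hpx, hpy, hpz, h_mul, h_mul]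
  norm_num

lemma Bc_one : Bc 1 = 0 := by rw [← h_one, Bc_h]

lemma Bc_x : Bc x = 0 := by rw [x_eq, Bc_h]
lemma Bc_y : Bc y = 1 := by rw [y_eq, Bc_h]
lemma Bc_xinv : Bc x⁻¹ = 0 := by rw [xinv_eq, Bc_h]
lemma Bc_yinv : Bc y⁻¹ = -1 := by rw [yinv_eq, Bc_h]

lemma Bc_gen_le {w : Heisenberg} (hw : w ∈ S ∨ w⁻¹ ∈ S) : (Bc w).natAbs ≤ 1 := by
  rcases hw with hw | hw
  · rcases hw with rfl | rfl
    · rw [Bc_x]; norm_num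
    · rw [Bc_y]; norm_num
  · rcases hw with hw | hw
    · have : w = x⁻¹ := by rw [← hw, inv_inv]
      rw [this, Bc_xinv]; norm_num
    · have : w = y⁻¹ := by rw [← hw, inv_inv]
      rw [this, Bc_yinv]; norm_num

lemma Bc_prod_le (l : List Heisenberg) (hl : okWord l) : (Bc l.prod).natAbs ≤ l.length := by
  induction l with
  | nil => simp [Bc_one]
  | cons w l ih =>
      rw [List.prod_cons, Bc_mul, List.length_cons]
      have h1 := Bc_gen_le (hl w List.mem_cons_self)
      have h2 := ih (fun v hv => hl v (List.mem_cons_of_mem w hv))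
      calc (Bc w + Bc l.prod).natAbs ≤ (Bc w).natAbs + (Bc l.prod).natAbs :=
            Int.natAbs_add_le _ _
        _ ≤ l.length + 1 := by omega

lemma Bc_le_wordLength (g : Heisenberg) : (Bc g).natAbs ≤ wordLength S g := by
  obtain ⟨l, hl, hp⟩ := exists_word_any g
  refine le_csInf ⟨l.length, l, hl, rfl, hp⟩ ?_
  rintro n ⟨l', hl', rfl, hp'⟩
  rw [← hp']
  exact Bc_prod_le l' hl'

lemma conj_x (u : Heisenberg) : u⁻¹ * x * u = h 1 0 (Bc u) := by
  conv_lhs => rw [eq_h u]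
  rw [h_inv, x_eq, h_mul, h_mul]
  congr 1 <;> ring

lemma sqrt_tendsto : Tendsto Real.sqrt atTop atTop := by
  apply tendsto_atTop_atTop.2
  intro b
  refine ⟨b ^ 2, fun a ha => ?_⟩
  rcases le_or_gt b 0 with hb | hb
  · exact hb.trans (Real.sqrt_nonneg a)
  · calc b = Real.sqrt (b ^ 2) := (Real.sqrt_sq hb.le).symm
      _ ≤ Real.sqrt a := Real.sqrt_le_sqrt ha

lemma omega_le_atTop (ω : Ultrafilter ℕ) (hω : ∀ A ∈ ω, A.Infinite) :
    (ω : Filter ℕ) ≤ atTop := by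
  intro s hs
  by_contra hcon
  have h1 : sᶜ ∈ ω := (Ultrafilter.compl_mem_iff_notMem).2 hcon
  have h2 : sᶜ.Finite := by
    obtain ⟨N, hN⟩ := mem_atTop_sets.mp hs
    apply Set.Finite.subset (Set.finite_Iio N)
    intro n hn
    by_contra hn2
    exact hn (hN n (not_lt.mp hn2))
  exact (hω sᶜ h1).elim h2

lemma main_tendsto (d : ℕ → ℝ) (hd : ∀ n, 0 < d n) (hdt : Tendsto d atTop atTop)
    (B : ℝ) (hB : 0 ≤ B) :
    Tendsto (fun n => (12 * Real.sqrt (B * d n) + 1) / d n) atTop (nhds 0) := by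
  have heq : ∀ n, (12 * Real.sqrt (B * d n) + 1) / d n
      = 12 * Real.sqrt B * (Real.sqrt (d n))⁻¹ + (d n)⁻¹ := by
    intro n
    have hs : Real.sqrt (d n) ≠ 0 := ne_of_gt (Real.sqrt_pos.2 (hd n))
    have hdd : Real.sqrt (d n) * Real.sqrt (d n) = d n := Real.mul_self_sqrt (hd n).le
    have key : Real.sqrt (d n) / d n = (Real.sqrt (d n))⁻¹ := by
      rw [← hdd]
      field_simp
      rw [Real.sqrt_sq (Real.sqrt_nonneg (d n))]
    rw [Real.sqrt_mul hB, add_div, one_div, mul_div_assoc, mul_div_assoc, key]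
    ring
  simp only [heq]
  have h1 : Tendsto (fun n => (Real.sqrt (d n))⁻¹) atTop (nhds 0) :=
    (sqrt_tendsto.comp hdt).inv_tendsto_atTop
  have h2 : Tendsto (fun n => (d n)⁻¹) atTop (nhds 0) := hdt.inv_tendsto_atTop
  have := (h1.const_mul (12 * Real.sqrt B)).add h2
  simpa using this


lemma nat_sqrt_le_real (m : ℕ) : (Nat.sqrt m : ℝ) ≤ Real.sqrt m := by
  have h1 : ((Nat.sqrt m : ℝ)) ^ 2 ≤ (m : ℝ) := by
    exact_mod_cast Nat.sqrt_le' m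
  have := Real.sqrt_le_sqrt h1
  rwa [Real.sqrt_sq (by positivity)] at this

lemma d_tendsto {d : ℕ → ℝ} (hmono : Monotone d) (hunb : ∀ B : ℝ, ∃ n, B < d n) :
    Tendsto d atTop atTop :=
  tendsto_atTop_atTop_of_monotone hmono (fun b => (hunb b).imp fun _ hn => hn.le)

lemma x_in_kernel (ω : Ultrafilter ℕ) (hω : ∀ A ∈ ω, A.Infinite)
    (d : ℕ → ℝ) (hd : ∀ n, 0 < d n) (hmono : Monotone d) (hunb : ∀ B : ℝ, ∃ n, B < d n) :
    inConeKernel S ω d x := by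
  intro xseq ⟨B, hB⟩
  have hdt : Tendsto d atTop atTop := d_tendsto hmono hunb
  have hB0 : 0 ≤ B := le_trans (div_nonneg (by positivity) (hd 0).le) (hB 0)
  have hbound : ∀ n, (wordLength S ((xseq n)⁻¹ * x * xseq n) : ℝ) / d n
      ≤ (12 * Real.sqrt (B * d n) + 1) / d n := by
    intro n
    have key : (wordLength S ((xseq n)⁻¹ * x * xseq n) : ℝ) ≤ 12 * Real.sqrt (B * d n) + 1 := by
      rw [conj_x (xseq n)]
      have h1 := wl_conj_x (Bc (xseq n))
      have h2 : ((Bc (xseq n)).natAbs : ℝ) ≤ B * d n := by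
        calc ((Bc (xseq n)).natAbs : ℝ) ≤ (wordLength S (xseq n) : ℝ) := by
              exact_mod_cast Bc_le_wordLength (xseq n)
          _ ≤ B * d n := by
              have := (div_le_iff₀ (hd n)).mp (hB n)
              linarith
      have h3 : (Nat.sqrt (Bc (xseq n)).natAbs : ℝ) ≤ Real.sqrt (B * d n) :=
        (nat_sqrt_le_real _).trans (Real.sqrt_le_sqrt h2)
      have h4 : (wordLength S (h 1 0 (Bc (xseq n))) : ℝ)
          ≤ 12 * (Nat.sqrt (Bc (xseq n)).natAbs : ℝ) + 1 := by
        exact_mod_cast h1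
      linarith
    have hdn := hd n
    gcongr
  refine squeeze_zero (fun n => div_nonneg (by positivity) (hd n).le) hbound ?_
  exact (main_tendsto d hd hdt B hB0).mono_left (omega_le_atTop ω hω)

lemma fc_in_kernel (ω : Ultrafilter ℕ) (hω : ∀ A ∈ ω, A.Infinite)
    (d : ℕ → ℝ) (hd : ∀ n, 0 < d n) (hmono : Monotone d) (hunb : ∀ B : ℝ, ∃ n, B < d n)
    (g : Heisenberg) (hg : Set.Finite {w | ∃ u : Heisenberg, u⁻¹ * g * u = w}) :
    inConeKernel S ω d g := by
  intro xseq _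
  have hdt : Tendsto d atTop atTop := d_tendsto hmono hunb
  obtain ⟨M, hM⟩ := (hg.image (fun w => (wordLength S w : ℝ))).bddAbove
  have hbound : ∀ n, (wordLength S ((xseq n)⁻¹ * g * xseq n) : ℝ) / d n ≤ M / d n := by
    intro n
    have h1 : (wordLength S ((xseq n)⁻¹ * g * xseq n) : ℝ) ≤ M :=
      hM ⟨_, ⟨xseq n, rfl⟩, rfl⟩
    have hdn := hd n
    gcongr
  refine squeeze_zero (fun n => div_nonneg (by positivity) (hd n).le) hbound ?_
  have : Tendsto (fun n => M / d n) atTop (nhds 0) := by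
    simp only [div_eq_mul_inv]
    simpa using hdt.inv_tendsto_atTop.const_mul M
  exact this.mono_left (omega_le_atTop ω hω)

lemma conj_class_x_infinite : Set.Infinite {w : Heisenberg | ∃ u : Heisenberg, u⁻¹ * x * u = w} := by
  apply Set.infinite_of_injective_forall_mem (f := fun q : ℤ => h 1 0 q)
  · intro q q' hqq
    have := congrArg Cc hqq
    rwa [Cc_h, Cc_h] at this
  · intro q
    exact ⟨h 0 q 0, by rw [conj_x, Bc_h]⟩

/-- In the Heisenberg group `H` with generating set `S = {x, y}`, the element `x` lies in the
kernel of the natural action of `H` on every asymptotic cone, while its conjugacy class is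
infinite; hence `FC(H) ⊊ ker(H ↷ Cone_ω(H, d_n))`. -/
theorem FC_ssubset_coneKernel_heisenberg :
    (∀ (ω : Ultrafilter ℕ), (∀ A ∈ ω, A.Infinite) →
      ∀ d : ℕ → ℝ, (∀ n, 0 < d n) → Monotone d → (∀ B : ℝ, ∃ n, B < d n) →
        inConeKernel {x, y} ω d x ∧
        {g : Heisenberg | Set.Finite {w | ∃ u : Heisenberg, u⁻¹ * g * u = w}} ⊂
          {g : Heisenberg | inConeKernel {x, y} ω d g}) ∧
    Set.Infinite {w : Heisenberg | ∃ u : Heisenberg, u⁻¹ * x * u = w} := by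
  refine ⟨fun ω hω d hd hmono hunb => ⟨x_in_kernel ω hω d hd hmono hunb, ?_⟩,
    conj_class_x_infinite⟩
  refine (Set.ssubset_iff_of_subset
      (fun g hg => fc_in_kernel ω hω d hd hmono hunb g hg)).mpr ?_
  exact ⟨x, x_in_kernel ω hω d hd hmono hunb, fun hfin => conj_class_x_infinite hfin⟩
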